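/- Assume there exist constants Y_{·1},...,Y_{·J} and β such that E[Y_{i,j}] = Y_{·j} whenever X_{i,j} = 0, and E[Y_{i,j}] = Y_{·j} + β whenever X_{i,j} = 1 and X_{i,j−1} = 0 (i.e. a constant additive treatment effect in the first period on treatment, with no assumption on later intervention periods). Then for any deterministic nonnegative weights w_j with positive sum, the controls-only crossover estimator is unbiased: E[β̂] = β. -/

import Mathlib

open MeasureTheory ProbabilityTheory Finset

/-- **Unbiasedness of the controls-only crossover estimator (Corollary 4).**
In a stepped wedge trial with clusters `1, …, I` and periods `1, …, J`, intervention indicators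
`X i j` nondecreasing in `j`, and integrable outcomes `Y i j` with `E[Y i j] = Ybar j` whenever
`X i j = 0`, and `E[Y i j] = Ybar j + β` whenever `X i j = 1` and `X i (j-1) = 0` (a constant
additive effect in the first period on treatment, no assumption on later intervention periods),
the controls-only crossover estimator `β̂` is unbiased: `E[β̂] = β`. -/
theorem stmt_6
    {Ω : Type*} [MeasureSpace Ω] [IsProbabilityMeasure (ℙ : Measure Ω)]
    (I J : ℕ) (Y : ℕ → ℕ → Ω → ℝ) (X : ℕ → ℕ → Bool) (Ybar : ℕ → ℝ) (β : ℝ)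
    -- intervention indicators are nondecreasing in `j`
    (hXmono : ∀ i, ∀ j j', j ≤ j' → X i j = true → X i j' = true)
    -- outcomes are integrable
    (hint : ∀ i ∈ Icc 1 I, ∀ j ∈ Icc 1 J, Integrable (Y i j) ℙ)
    -- mean structure: control periods, and first period on treatment
    (hmean0 : ∀ i ∈ Icc 1 I, ∀ j ∈ Icc 1 J, X i j = false →
      ∫ ω, Y i j ω ∂ℙ = Ybar j)
    (hmean1 : ∀ i ∈ Icc 1 I, ∀ j ∈ Icc 1 J, X i j = true → X i (j - 1) = false →
      ∫ ω, Y i j ω ∂ℙ = Ybar j + β)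
    -- the sets `I_{0,j}`, `I_{1,j}` and their sizes
    (I0 I1 : ℕ → Finset ℕ) (n0 n1 : ℕ → ℕ)
    (hI0 : ∀ j, I0 j = (Icc 1 I).filter fun i => X i j = false ∧ X i (j - 1) = false)
    (hI1 : ∀ j, I1 j = (Icc 1 I).filter fun i => X i j = true ∧ X i (j - 1) = false)
    (hn0 : ∀ j, n0 j = (I0 j).card) (hn1 : ∀ j, n1 j = (I1 j).card)
    -- consecutive-period contrasts
    (D : ℕ → ℕ → Ω → ℝ) (hD : ∀ i j ω, D i j ω = Y i j ω - Y i (j - 1) ω)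
    -- period-specific crossover estimators
    (βhat : ℕ → Ω → ℝ)
    (hβhat : ∀ j ω, βhat j ω =
      (n1 j : ℝ)⁻¹ * ∑ i ∈ I1 j, D i j ω - (n0 j : ℝ)⁻¹ * ∑ i ∈ I0 j, D i j ω)
    -- the applicable periods
    (S : Finset ℕ)
    (hS : S = (Icc 2 J).filter fun j => 1 ≤ n0 j ∧ 1 ≤ n1 j)
    -- deterministic nonnegative weights with positive sum
    (w : ℕ → ℝ) (hw : ∀ j ∈ S, 0 ≤ w j) (hwpos : 0 < ∑ j ∈ S, w j) :
    ∫ ω, ∑ j ∈ S, (w j / ∑ j' ∈ S, w j') * βhat j ω ∂ℙ = β := by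

  have key : ∀ j ∈ S, Integrable (βhat j) ℙ ∧ ∫ ω, βhat j ω ∂ℙ = β := by
    intro j hj
    rw [hS] at hj
    simp only [mem_filter, mem_Icc] at hj
    obtain ⟨⟨hj2, hjJ⟩, hn0p, hn1p⟩ := hj
    have hjJ' : j ∈ Icc 1 J := mem_Icc.2 ⟨le_trans one_le_two hj2, hjJ⟩
    have hj1J : j - 1 ∈ Icc 1 J :=
      mem_Icc.2 ⟨Nat.le_sub_one_of_lt hj2, le_trans (Nat.sub_le _ _) hjJ⟩
    have hDe : ∀ i, D i j = fun ω => Y i j ω - Y i (j - 1) ω := fun i => funext (hD i j)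
    have hDint : ∀ i ∈ Icc 1 I, Integrable (D i j) ℙ := by
      intro i hi
      rw [hDe i]
      exact (hint i hi j hjJ').sub (hint i hi (j - 1) hj1J)
    have hDval0 : ∀ i ∈ I0 j, ∫ ω, D i j ω ∂ℙ = Ybar j - Ybar (j - 1) := by
      intro i hi
      rw [hI0] at hi
      simp only [mem_filter] at hi
      obtain ⟨hiI, h1, h2⟩ := hi
      rw [hDe i, integral_sub (hint i hiI j hjJ') (hint i hiI (j - 1) hj1J),
        hmean0 i hiI j hjJ' h1, hmean0 i hiI (j - 1) hj1J h2]
    have hDval1 : ∀ i ∈ I1 j, ∫ ω, D i j ω ∂ℙ = Ybar j + β - Ybar (j - 1) := by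
      intro i hi
      rw [hI1] at hi
      simp only [mem_filter] at hi
      obtain ⟨hiI, h1, h2⟩ := hi
      rw [hDe i, integral_sub (hint i hiI j hjJ') (hint i hiI (j - 1) hj1J),
        hmean1 i hiI j hjJ' h1 h2, hmean0 i hiI (j - 1) hj1J h2]
    have hsub0 : ∀ i ∈ I0 j, i ∈ Icc 1 I := by
      intro i hi; rw [hI0] at hi; exact (mem_filter.1 hi).1
    have hsub1 : ∀ i ∈ I1 j, i ∈ Icc 1 I := by
      intro i hi; rw [hI1] at hi; exact (mem_filter.1 hi).1
    have hint0 : Integrable (fun ω => ∑ i ∈ I0 j, D i j ω) ℙ :=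
      integrable_finset_sum _ (fun i hi => hDint i (hsub0 i hi))
    have hint1 : Integrable (fun ω => ∑ i ∈ I1 j, D i j ω) ℙ :=
      integrable_finset_sum _ (fun i hi => hDint i (hsub1 i hi))
    have hβe : βhat j = fun ω =>
        (n1 j : ℝ)⁻¹ * ∑ i ∈ I1 j, D i j ω - (n0 j : ℝ)⁻¹ * ∑ i ∈ I0 j, D i j ω :=
      funext (hβhat j)
    have hβint : Integrable (βhat j) ℙ := by
      rw [hβe]; exact (hint1.const_mul _).sub (hint0.const_mul _)
    refine ⟨hβint, ?_⟩
    have hn0ne : (n0 j : ℝ) ≠ 0 := Nat.cast_ne_zero.2 (by omega)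
    have hn1ne : (n1 j : ℝ) ≠ 0 := Nat.cast_ne_zero.2 (by omega)
    rw [hβe, integral_sub (hint1.const_mul _) (hint0.const_mul _),
      integral_const_mul, integral_const_mul, integral_finset_sum _
        (fun i hi => hDint i (hsub1 i hi)), integral_finset_sum _
        (fun i hi => hDint i (hsub0 i hi)),
      Finset.sum_congr rfl hDval1, Finset.sum_congr rfl hDval0,
      Finset.sum_const, Finset.sum_const, nsmul_eq_mul, nsmul_eq_mul,
      ← hn0 j, ← hn1 j]
    field_simp
    ring
  have hintsum : ∀ j ∈ S, Integrable (fun ω => (w j / ∑ j' ∈ S, w j') * βhat j ω) ℙ :=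
    fun j hj => ((key j hj).1.const_mul _)
  rw [integral_finset_sum _ hintsum]
  have : ∀ j ∈ S, ∫ ω, (w j / ∑ j' ∈ S, w j') * βhat j ω ∂ℙ
      = (w j / ∑ j' ∈ S, w j') * β := by
    intro j hj
    rw [integral_const_mul, (key j hj).2]
  rw [Finset.sum_congr rfl this, ← Finset.sum_mul, ← Finset.sum_div,
    div_self (ne_of_gt hwpos), one_mul]
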